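/- For any ideal I on ω, the family Ĩ = {A ⊆ ω : I↾A is not null} is an ideal on ω extending I, where I↾A = {X ∈ I : X ⊆ A} and 'null' refers to the Haar/coin-flipping product measure on 2^A. In particular Ĩ is downward closed and closed under finite unions (the latter via Fubini: if I↾A and I↾B are non-null for disjoint A, B, then I↾(A∪B) is non-null). -/

import Mathlib

/-- An ideal on ω: contains all finite sets, downward closed, closed under unions. -/
def IsIdeal (I : Set (Set ℕ)) : Prop :=
  (∀ X : Set ℕ, X.Finite → X ∈ I) ∧
  (∀ X Y : Set ℕ, X ⊆ Y → Y ∈ I → X ∈ I) ∧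
  (∀ X Y : Set ℕ, X ∈ I → Y ∈ I → X ∪ Y ∈ I)

noncomputable section
open MeasureTheory

instance : TopologicalSpace (Multiplicative (ZMod 2)) := ⊥
instance : DiscreteTopology (Multiplicative (ZMod 2)) := ⟨rfl⟩
instance : IsTopologicalGroup (Multiplicative (ZMod 2)) := by
  constructor <;> exact continuous_of_discreteTopology
instance cantorMS (ι : Type) : MeasurableSpace (ι → Multiplicative (ZMod 2)) := borel _
instance (ι : Type) : BorelSpace (ι → Multiplicative (ZMod 2)) := ⟨rfl⟩

/-- The Haar ("coin-flipping") measure on the generalized Cantor space `2^ι`. -/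
def coinMeasure (ι : Type) : Measure (ι → Multiplicative (ZMod 2)) :=
  Measure.haarMeasure ⟨⟨Set.univ, isCompact_univ⟩, by
    rw [interior_univ]; exact Set.univ_nonempty⟩

open Classical in
/-- The characteristic function of `X`, restricted to `A`, as a point of `2^A`
(with values in the two-element group). -/
def chiG (A : Set ℕ) (X : Set ℕ) : ↥A → Multiplicative (ZMod 2) :=
  fun i => if (i : ℕ) ∈ X then Multiplicative.ofAdd 1 else Multiplicative.ofAdd 0

/-- A family `S` of subsets of ω is null in `2^A` (w.r.t. the coin-flipping measure). -/
def NullIn (A : Set ℕ) (S : Set (Set ℕ)) : Prop := coinMeasure ↥A (chiG A '' S) = 0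

end

/-- The restriction `I↾A = {X ∈ I : X ⊆ A}`. -/
def restr (I : Set (Set ℕ)) (A : Set ℕ) : Set (Set ℕ) := {X ∈ I | X ⊆ A}

/-- `Ĩ = {A : I↾A is not null in 2^A}`. -/
def tildeN (I : Set (Set ℕ)) : Set (Set ℕ) := {A | ¬ NullIn A (restr I A)}

noncomputable section
open MeasureTheory

abbrev Gm := Multiplicative (ZMod 2)

example (ι : Type) : CompactSpace (ι → Gm) := inferInstance
example (ι : Type) : IsTopologicalGroup (ι → Gm) := inferInstance
example (A : Set ℕ) : SecondCountableTopology (↥A → Gm) := inferInstance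
example (A B : Set ℕ) : BorelSpace ((↥A → Gm) × (↥B → Gm)) := inferInstance
example (ι : Type) : MeasurableMul (ι → Gm) := inferInstance

instance coin_prob (ι : Type) : IsProbabilityMeasure (coinMeasure ι) :=
  ⟨Measure.haarMeasure_self⟩

instance coin_haar (ι : Type) : (coinMeasure ι).IsHaarMeasure := by
  unfold coinMeasure; infer_instance

example (ι : Type) : Measure.IsHaarMeasure (coinMeasure ι) := by
  unfold coinMeasure; infer_instance

def splitFun (A B : Set ℕ) (f : ↥(A ∪ B) → Gm) : (↥A → Gm) × (↥B → Gm) :=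
  ⟨fun a => f ⟨a, Or.inl a.2⟩, fun b => f ⟨b, Or.inr b.2⟩⟩

open Classical in
def glueFun (A B : Set ℕ) (p : (↥A → Gm) × (↥B → Gm)) : ↥(A ∪ B) → Gm :=
  fun i => if h : (i : ℕ) ∈ A then p.1 ⟨i, h⟩ else p.2 ⟨i, i.2.resolve_left h⟩

lemma glue_split (A B : Set ℕ) (f : ↥(A ∪ B) → Gm) : glueFun A B (splitFun A B f) = f := by
  funext i
  rcases i with ⟨i, hi⟩
  by_cases h : i ∈ A <;> simp [glueFun, splitFun, h]

lemma split_glue (A B : Set ℕ) (hd : Disjoint A B) (p : (↥A → Gm) × (↥B → Gm)) :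
    splitFun A B (glueFun A B p) = p := by
  refine Prod.ext ?_ ?_ <;> funext x
  · simp [glueFun, splitFun, x.2]
  · have hx : (x : ℕ) ∉ A := fun h => Set.disjoint_left.mp hd h x.2
    simp [glueFun, splitFun, hx]

lemma continuous_splitFun (A B : Set ℕ) : Continuous (splitFun A B) :=
  Continuous.prodMk (continuous_pi fun _ => continuous_apply _)
    (continuous_pi fun _ => continuous_apply _)

lemma continuous_glueFun (A B : Set ℕ) : Continuous (glueFun A B) := by
  apply continuous_pi
  intro i
  by_cases h : (i : ℕ) ∈ A
  · simp only [glueFun, dif_pos h]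
    exact (continuous_apply _).comp continuous_fst
  · simp only [glueFun, dif_neg h]
    exact (continuous_apply _).comp continuous_snd

def splitMulEquiv (A B : Set ℕ) (hd : Disjoint A B) :
    (↥(A ∪ B) → Gm) ≃* ((↥A → Gm) × (↥B → Gm)) where
  toFun := splitFun A B
  invFun := glueFun A B
  left_inv := glue_split A B
  right_inv := split_glue A B hd
  map_mul' _ _ := rfl

lemma map_split (A B : Set ℕ) (hd : Disjoint A B) :
    (coinMeasure ↥(A ∪ B)).map (splitFun A B) = (coinMeasure ↥A).prod (coinMeasure ↥B) := by
  have hcoe : ⇑(splitMulEquiv A B hd) = splitFun A B := rfl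
  have h1 : Measure.IsHaarMeasure ((coinMeasure ↥(A ∪ B)).map (splitFun A B)) := by
    rw [← hcoe]
    exact (splitMulEquiv A B hd).isHaarMeasure_map (coinMeasure ↥(A ∪ B))
      (hcoe ▸ continuous_splitFun A B) (continuous_glueFun A B)
  have h2 : Measure.IsHaarMeasure ((coinMeasure ↥A).prod (coinMeasure ↥B)) :=
    inferInstance
  have hprob1 : IsProbabilityMeasure ((coinMeasure ↥(A ∪ B)).map (splitFun A B)) :=
    Measure.isProbabilityMeasure_map (continuous_splitFun A B).measurable.aemeasurable
  have hprob2 : IsProbabilityMeasure ((coinMeasure ↥A).prod (coinMeasure ↥B)) := inferInstance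
  set K : TopologicalSpace.PositiveCompacts ((↥A → Gm) × (↥B → Gm)) :=
    ⟨⟨Set.univ, isCompact_univ⟩, by rw [interior_univ]; exact Set.univ_nonempty⟩ with hK
  have e1 := Measure.haarMeasure_unique ((coinMeasure ↥(A ∪ B)).map (splitFun A B)) K
  have e2 := Measure.haarMeasure_unique ((coinMeasure ↥A).prod (coinMeasure ↥B)) K
  have hu1 : ((coinMeasure ↥(A ∪ B)).map (splitFun A B)) (K : Set _) = 1 := by
    exact measure_univ
  have hu2 : ((coinMeasure ↥A).prod (coinMeasure ↥B)) (K : Set _) = 1 := by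
    exact measure_univ
  rw [e1, e2, hu1, hu2]

lemma chiG_congr {A X Y : Set ℕ} (h : ∀ a ∈ A, (a ∈ X ↔ a ∈ Y)) : chiG A X = chiG A Y := by
  funext i
  have := h i i.2
  simp only [chiG]
  by_cases hx : (i : ℕ) ∈ X
  · rw [if_pos hx, if_pos (this.mp hx)]
  · rw [if_neg hx, if_neg (fun hy => hx (this.mpr hy))]

lemma splitFun_chiG (A B Z : Set ℕ) :
    splitFun A B (chiG (A ∪ B) Z) = (chiG A Z, chiG B Z) := rfl

lemma glueFun_chiG {A B Z W : Set ℕ} (hd : Disjoint A B) (hZ : Z ⊆ A) (hW : W ⊆ B) :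
    glueFun A B (chiG A Z, chiG B W) = chiG (A ∪ B) (Z ∪ W) := by
  funext i
  by_cases h : (i : ℕ) ∈ A
  · have hiW : (i : ℕ) ∉ W := fun hw => Set.disjoint_left.mp hd h (hW hw)
    simp only [glueFun, dif_pos h, chiG]
    by_cases hz : (i : ℕ) ∈ Z
    · rw [if_pos hz, if_pos (show (i:ℕ) ∈ Z ∪ W from Or.inl hz)]
    · rw [if_neg hz, if_neg (fun hc : (i:ℕ) ∈ Z ∪ W => hc.elim hz hiW)]
  · have hiZ : (i : ℕ) ∉ Z := fun hz => h (hZ hz)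
    simp only [glueFun, dif_neg h, chiG]
    by_cases hw : (i : ℕ) ∈ W
    · rw [if_pos hw, if_pos (show (i:ℕ) ∈ Z ∪ W from Or.inr hw)]
    · rw [if_neg hw, if_neg (fun hc : (i:ℕ) ∈ Z ∪ W => hc.elim hiZ hw)]

lemma nullIn_union_left {A B : Set ℕ} (hd : Disjoint A B) {S T : Set (Set ℕ)}
    (hST : ∀ Z ∈ S, Z ∩ A ∈ T) (hT : NullIn A T) : NullIn (A ∪ B) S := by
  set N := toMeasurable (coinMeasure ↥A) (chiG A '' T) with hNdef
  have hNmeas : MeasurableSet N := measurableSet_toMeasurable _ _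
  have hN0 : coinMeasure ↥A N = 0 := by rw [hNdef, measure_toMeasurable]; exact hT
  have hsub : chiG (A ∪ B) '' S ⊆ splitFun A B ⁻¹' (N ×ˢ Set.univ) := by
    rintro _ ⟨Z, hZ, rfl⟩
    refine Set.mem_preimage.2 (Set.mem_prod.2 ⟨?_, trivial⟩)
    show chiG A Z ∈ N
    have : chiG A Z = chiG A (Z ∩ A) :=
      chiG_congr (fun a ha => by simp [ha])
    rw [this]
    exact subset_toMeasurable _ _ ⟨Z ∩ A, hST Z hZ, rfl⟩
  refine le_antisymm ?_ (zero_le)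
  calc coinMeasure ↥(A ∪ B) (chiG (A ∪ B) '' S)
      ≤ coinMeasure ↥(A ∪ B) (splitFun A B ⁻¹' (N ×ˢ Set.univ)) := measure_mono hsub
    _ = ((coinMeasure ↥A).prod (coinMeasure ↥B)) (N ×ˢ Set.univ) := by
        rw [← map_split A B hd, Measure.map_apply (continuous_splitFun A B).measurable
          (hNmeas.prod MeasurableSet.univ)]
    _ = coinMeasure ↥A N * coinMeasure ↥B Set.univ := Measure.prod_prod _ _
    _ = 0 := by rw [hN0, zero_mul]

lemma fubini_step {A B : Set ℕ} (hd : Disjoint A B) {S T U : Set (Set ℕ)}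
    (hsub : ∀ Z ∈ T, ∀ W ∈ U, Z ∪ W ∈ S)
    (hTA : ∀ Z ∈ T, Z ⊆ A) (hUB : ∀ W ∈ U, W ⊆ B)
    (hS : NullIn (A ∪ B) S) (hT : ¬ NullIn A T) : NullIn B U := by
  set N := toMeasurable (coinMeasure ↥(A ∪ B)) (chiG (A ∪ B) '' S) with hNdef
  have hNmeas : MeasurableSet N := measurableSet_toMeasurable _ _
  have hN0 : coinMeasure ↥(A ∪ B) N = 0 := by rw [hNdef, measure_toMeasurable]; exact hS
  set Q := glueFun A B ⁻¹' N with hQdef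
  have hQm : MeasurableSet Q := (continuous_glueFun A B).measurable hNmeas
  have hQ0 : ((coinMeasure ↥A).prod (coinMeasure ↥B)) Q = 0 := by
    rw [← map_split A B hd, Measure.map_apply (continuous_splitFun A B).measurable hQm]
    have : splitFun A B ⁻¹' Q = N := by
      ext f
      simp only [hQdef, Set.mem_preimage, glue_split]
    rw [this]; exact hN0
  have hae := (Measure.measure_prod_null hQm).1 hQ0
  have hbad : coinMeasure ↥A {x | coinMeasure ↥B (Prod.mk x ⁻¹' Q) ≠ 0} = 0 := by
    simpa [Filter.EventuallyEq, ae_iff] using hae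
  have hnotsub : ¬ chiG A '' T ⊆ {x | coinMeasure ↥B (Prod.mk x ⁻¹' Q) ≠ 0} := by
    intro hcon
    exact hT (le_antisymm (hbad ▸ measure_mono hcon) (zero_le))
  obtain ⟨x, hxT, hxgood⟩ := Set.not_subset.1 hnotsub
  obtain ⟨Z, hZT, rfl⟩ := hxT
  have hslice : coinMeasure ↥B (Prod.mk (chiG A Z) ⁻¹' Q) = 0 := by
    by_contra hne; exact hxgood hne
  have hUsub : chiG B '' U ⊆ Prod.mk (chiG A Z) ⁻¹' Q := by
    rintro _ ⟨W, hW, rfl⟩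
    show glueFun A B (chiG A Z, chiG B W) ∈ N
    rw [glueFun_chiG hd (hTA Z hZT) (hUB W hW)]
    exact subset_toMeasurable _ _ ⟨Z ∪ W, hsub Z hZT W hW, rfl⟩
  exact le_antisymm (hslice ▸ measure_mono hUsub) (zero_le)

lemma gm_eq_zero : ∀ g : Multiplicative (ZMod 2), g ≠ Multiplicative.ofAdd 1 →
    g = Multiplicative.ofAdd 0 := by decide

lemma mem_tildeN_of_mem {I : Set (Set ℕ)} (hI : IsIdeal I) {A : Set ℕ} (hA : A ∈ I) :
    A ∈ tildeN I := by
  intro hnull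
  have himg : chiG A '' restr I A = Set.univ := by
    refine Set.eq_univ_of_forall fun f => ?_
    refine ⟨{n : ℕ | ∃ h : n ∈ A, f ⟨n, h⟩ = Multiplicative.ofAdd 1}, ⟨?_, ?_⟩, ?_⟩
    · exact hI.2.1 _ A (fun n hn => hn.1) hA
    · exact fun n hn => hn.1
    · funext i
      simp only [chiG]
      by_cases hx : (i : ℕ) ∈ {n : ℕ | ∃ h : n ∈ A, f ⟨n, h⟩ = Multiplicative.ofAdd 1}
      · rw [if_pos hx]
        obtain ⟨h, hf⟩ := hx
        exact hf.symm
      · rw [if_neg hx]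
        have : f i ≠ Multiplicative.ofAdd 1 := fun hc => hx ⟨i.2, by rw [Subtype.coe_eta]; exact hc⟩
        exact (gm_eq_zero _ this).symm
  unfold NullIn at hnull
  rw [himg] at hnull
  exact one_ne_zero (hnull ▸ (measure_univ (μ := coinMeasure ↥A)).symm)

end

/-- For any ideal `I` on ω, the family `Ĩ = {A : I↾A not null}` is an ideal extending
`I`; in particular it is downward closed and closed under finite unions. -/
theorem tilde_null_is_ideal (I : Set (Set ℕ)) (hI : IsIdeal I) :
    IsIdeal (tildeN I) ∧ I ⊆ tildeN I := by
  obtain ⟨hfin, hdown, hunion⟩ := hI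
  have hmem : ∀ A ∈ I, A ∈ tildeN I := fun A hA => mem_tildeN_of_mem ⟨hfin, hdown, hunion⟩ hA
  refine ⟨⟨fun X hX => hmem X (hfin X hX), ?_, ?_⟩, fun A hA => hmem A hA⟩
  · -- downward closed
    intro X Y hXY hY hX
    apply hY
    have hd : Disjoint X (Y \ X) := Set.disjoint_sdiff_right
    have := nullIn_union_left hd (S := restr I Y) (T := restr I X)
      (fun Z hZ => ⟨hdown _ _ Set.inter_subset_left hZ.1, Set.inter_subset_right⟩) hX
    rwa [Set.union_diff_cancel hXY] at this
  · -- union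
    intro X Y hX hY hS
    have hd : Disjoint X (Y \ X) := Set.disjoint_sdiff_right
    rw [← Set.union_diff_self] at hS
    have hU : NullIn (Y \ X) ((fun W => W \ X) '' restr I Y) := by
      refine fubini_step hd ?_ ?_ ?_ hS hX
      · rintro Z hZ _ ⟨W, hW, rfl⟩
        refine ⟨hunion _ _ hZ.1 (hdown _ _ Set.diff_subset hW.1), ?_⟩
        rw [Set.union_diff_self]
        exact Set.union_subset (hZ.2.trans Set.subset_union_left)
          (fun a ha => Or.inr (hW.2 ha.1))
      · exact fun Z hZ => hZ.2
      · rintro _ ⟨W, hW, rfl⟩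
        exact fun a ha => ⟨hW.2 ha.1, ha.2⟩
    apply hY
    have hd2 : Disjoint (Y \ X) (Y ∩ X) :=
      Set.disjoint_left.2 fun a ha hb => ha.2 hb.2
    have := nullIn_union_left hd2 (S := restr I Y) (T := (fun W => W \ X) '' restr I Y)
      (fun Z hZ => ⟨Z, hZ, by ext a; exact ⟨fun h => ⟨h.1, hZ.2 h.1, h.2⟩, fun h => ⟨h.1, h.2.2⟩⟩⟩) hU
    rwa [show (Y \ X) ∪ (Y ∩ X) = Y by
      ext a; constructor
      · rintro (h | h); exacts [h.1, h.1]
      · intro h; by_cases hx : a ∈ X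
        · exact Or.inr ⟨h, hx⟩
        · exact Or.inl ⟨h, hx⟩] at this
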